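/- Combinatorial equality for d = 3: for all natural numbers u, 40·C(u+1, 3) + 24·C(u, 3) = Σ_{i=0}^{3} (−1)^i C(u, i)·C(5u, 3−i). -/

import Mathlib

lemma ch2_int (n : ℕ) : (n.choose 2 : ℤ) * 2 = n * (n - 1) := by
  induction n with
  | zero => simp
  | succ k ih =>
    rw [Nat.choose_succ_succ, Nat.choose_one_right]
    push_cast
    push_cast at ih
    linarith [ih]

lemma ch3_int (n : ℕ) : (n.choose 3 : ℤ) * 6 = n * (n - 1) * (n - 2) := by
  induction n with
  | zero => simp
  | succ k ih =>
    have h2 := ch2_int k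
    rw [Nat.choose_succ_succ]
    push_cast
    push_cast at ih h2
    nlinarith [ih, h2]

/-- Combinatorial equality for `d = 3`:
`40·C(u+1,3) + 24·C(u,3) = Σ_{i=0}^{3} (-1)^i C(u,i)·C(5u, 3-i)`. -/
theorem combinatorial_equality_d_three (u : ℕ) :
    (40 * (u + 1).choose 3 + 24 * u.choose 3 : ℤ) =
      ∑ i ∈ Finset.range 4,
        (-1 : ℤ) ^ i * (u.choose i) * ((5 * u).choose (3 - i)) := by
  have hA := ch3_int (u + 1)
  have hB := ch3_int u
  have hC := ch3_int (5 * u)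
  have hD := ch2_int (5 * u)
  have hE := ch2_int u
  simp only [Finset.sum_range_succ, Finset.sum_range_zero]
  norm_num [Nat.choose_one_right]
  push_cast at hA hC hD ⊢
  apply mul_left_cancel₀ (show (6:ℤ) ≠ 0 by norm_num)
  linear_combination 40 * hA + 25 * hB - hC + 3 * u * hD - 15 * u * hE
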